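/- Suppose n is odd with n ≥ 3. Then for an integer k with 1 ≤ k ≤ m, there exists a profile u with |G_C(u)| = k if and only if it is not the case that (m is even and k = m) and not the case that (m is odd and k = m − 1). -/

import Mathlib

open Finset

/-- `x` defeats `y` by simple majority at `u`:
`|{i : x ≻_{u(i)} y}| > |{i : y ≻_{u(i)} x}|`.  A profile assigns to each
individual `i` a rank equivalence `u i : Fin m ≃ Fin m` (lower rank = better),
so `i` prefers `x` to `y` iff `(u i) x < (u i) y`. -/
def defeats {m n : ℕ} (u : Fin n → (Fin m ≃ Fin m)) (x y : Fin m) : Prop :=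
  (univ.filter (fun i : Fin n => (u i) y < (u i) x)).card <
    (univ.filter (fun i : Fin n => (u i) x < (u i) y)).card

instance {m n : ℕ} (u : Fin n → (Fin m ≃ Fin m)) : DecidableRel (defeats u) :=
  fun _ _ => by unfold defeats; infer_instance

/-- The Copeland score of `x` at `u`: the number of alternatives `x` defeats
by simple majority. -/
def copelandScore {m n : ℕ} (u : Fin n → (Fin m ≃ Fin m)) (x : Fin m) : ℕ :=
  (univ.filter (fun y : Fin m => defeats u x y)).card

/-- The Copeland correspondence `G_C(u)`: alternatives with maximal Copeland
score. -/
def copelandSet {m n : ℕ} (u : Fin n → (Fin m ≃ Fin m)) : Finset (Fin m) :=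
  univ.filter (fun x => ∀ z : Fin m, copelandScore u z ≤ copelandScore u x)

/- ## helpers -/

lemma card_filter_fin (m : ℕ) (P : ℕ → Prop) [DecidablePred P] :
    (univ.filter (fun y : Fin m => P y.val)).card = ((range m).filter P).card := by
  apply Finset.card_nbij (fun y => y.val)
  · intro a ha
    simp only [mem_coe, mem_filter, mem_range, mem_univ, true_and] at ha ⊢
    exact ⟨a.isLt, ha⟩
  · intro a _ b _ hab
    exact Fin.val_injective hab
  · intro b hb
    simp only [Set.mem_image, mem_coe, mem_filter, mem_range, mem_univ, true_and] at hb ⊢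
    exact ⟨⟨b, hb.1⟩, by simp [hb.2], rfl⟩

lemma card_filter_fin3 (P : Fin 3 → Prop) [DecidablePred P] :
    (univ.filter P).card =
      (if P 0 then 1 else 0) + (if P 1 then 1 else 0) + (if P 2 then 1 else 0) := by
  rw [Finset.card_filter]
  exact Fin.sum_univ_three _

lemma maj_iff (a1 b1 a2 b2 a3 b3 : ℕ) (h1 : a1 ≠ b1) (h2 : a2 ≠ b2) (h3 : a3 ≠ b3) :
    ((if b1 < a1 then 1 else 0) + (if b2 < a2 then 1 else 0) + (if b3 < a3 then 1 else 0) <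
      (if a1 < b1 then 1 else 0) + (if a2 < b2 then 1 else 0) + (if a3 < b3 then 1 else 0)) ↔
      ((a1 < b1 ∧ a2 < b2) ∨ (a1 < b1 ∧ a3 < b3) ∨ (a2 < b2 ∧ a3 < b3)) := by
  split_ifs <;> omega

lemma card_filter_two_ico (P : ℕ → Prop) [DecidablePred P] (a b c d N : ℕ)
    (h : ∀ y, y < N → (P y ↔ (a ≤ y ∧ y < b) ∨ (c ≤ y ∧ y < d)))
    (hbc : b ≤ c) (hbN : b ≤ N) (hdN : d ≤ N) :
    ((range N).filter P).card = (b - a) + (d - c) := by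
  have hset : (range N).filter P = Ico a b ∪ Ico c d := by
    ext y
    simp only [mem_filter, mem_range, mem_union, mem_Ico]
    constructor
    · rintro ⟨hy, hP⟩; exact (h y hy).1 hP
    · intro hy
      have hyN : y < N := by omega
      exact ⟨hyN, (h y hyN).2 hy⟩
  rw [hset, card_union_of_disjoint, Nat.card_Ico, Nat.card_Ico]
  rw [Finset.disjoint_left]
  intro y hy hy'
  simp only [mem_Ico] at hy hy'
  omega

lemma card_filter_split {α : Type*} (s : Finset α) (p q : α → Prop)
    [DecidablePred p] [DecidablePred q] :
    (s.filter p).card = (s.filter (fun a => p a ∧ q a)).card +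
      (s.filter (fun a => p a ∧ ¬ q a)).card := by
  rw [← Finset.filter_filter, ← Finset.filter_filter,
    Finset.card_filter_add_card_filter_not]

def extendProfile {m n : ℕ} (v : Fin 3 → (Fin m ≃ Fin m)) : Fin n → (Fin m ≃ Fin m) :=
  fun i => if h : (i : ℕ) < 3 then v ⟨i, h⟩
    else if (i : ℕ) % 2 = 0 then Equiv.refl _ else Fin.revPerm

lemma evens_eq_odds {n : ℕ} (hno : Odd n) :
    (univ.filter (fun i : Fin n => ¬ (i : ℕ) < 3 ∧ (i : ℕ) % 2 = 0)).card =
      (univ.filter (fun i : Fin n => ¬ (i : ℕ) < 3 ∧ (i : ℕ) % 2 = 1)).card := by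
  rw [card_filter_fin n (fun j => ¬ j < 3 ∧ j % 2 = 0),
      card_filter_fin n (fun j => ¬ j < 3 ∧ j % 2 = 1)]
  have hn1 : n % 2 = 1 := Nat.odd_iff.mp hno
  apply Finset.card_nbij' (fun i => i - 1) (fun j => j + 1) <;>
  · intro a ha
    simp only [mem_coe, mem_filter, mem_range] at ha ⊢
    omega

lemma extend_count {m n : ℕ} (hn : 3 ≤ n) (hno : Odd n) (v : Fin 3 → (Fin m ≃ Fin m))
    (x y : Fin m) (hxy : x ≠ y) :
    (univ.filter (fun i : Fin n => (extendProfile v i) x < (extendProfile v i) y)).card =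
      (univ.filter (fun i : Fin 3 => (v i) x < (v i) y)).card +
      (univ.filter (fun i : Fin n => ¬ (i : ℕ) < 3 ∧ (i : ℕ) % 2 = 0)).card := by
  rw [card_filter_split univ _ (fun i : Fin n => (i : ℕ) < 3)]
  congr 1
  · -- first three voters
    refine Finset.card_nbij' (fun i => (⟨(i : ℕ) % 3, by omega⟩ : Fin 3))
      (fun j => (⟨(j : ℕ), by omega⟩ : Fin n)) ?_ ?_ ?_ ?_
    · intro a ha
      simp only [mem_coe, mem_filter, mem_univ, true_and] at ha ⊢
      obtain ⟨hP, h3⟩ := ha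
      have hmod : (a : ℕ) % 3 = (a : ℕ) := Nat.mod_eq_of_lt h3
      have : (⟨(a : ℕ) % 3, by omega⟩ : Fin 3) = ⟨(a : ℕ), h3⟩ :=
        Fin.ext hmod
      rw [this]
      simpa only [extendProfile, dif_pos h3] using hP
    · intro j hj
      simp only [mem_coe, mem_filter, mem_univ, true_and] at hj ⊢
      have h3 : ((⟨(j : ℕ), by omega⟩ : Fin n) : ℕ) < 3 := j.isLt
      refine ⟨?_, h3⟩
      simp only [extendProfile, dif_pos h3]
      convert hj using 3 <;> exact Fin.ext rfl
    · intro a ha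
      simp only [mem_coe, mem_filter, mem_univ, true_and] at ha
      exact Fin.ext (by simp [Nat.mod_eq_of_lt ha.2])
    · intro j _
      exact Fin.ext (by simp [Nat.mod_eq_of_lt j.isLt])
  · -- the padding voters
    rcases lt_or_gt_of_ne hxy with hlt | hgt
    · apply Finset.card_bij (fun a _ => a)
      · intro a ha
        simp only [mem_filter, mem_univ, true_and] at ha ⊢
        obtain ⟨hP, h3⟩ := ha
        refine ⟨h3, ?_⟩
        by_contra hpar
        simp only [extendProfile, dif_neg h3, if_neg hpar] at hP
        simp only [Fin.revPerm_apply, Fin.rev_lt_rev] at hP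
        exact absurd hlt (asymm hP)
      · intro _ _ _ _ h; exact h
      · intro b hb
        simp only [mem_filter, mem_univ, true_and] at hb
        refine ⟨b, ?_, rfl⟩
        simp only [mem_filter, mem_univ, true_and]
        refine ⟨?_, hb.1⟩
        simp only [extendProfile, dif_neg hb.1, if_pos hb.2]
        exact hlt
    · rw [evens_eq_odds hno]
      apply Finset.card_bij (fun a _ => a)
      · intro a ha
        simp only [mem_filter, mem_univ, true_and] at ha ⊢
        obtain ⟨hP, h3⟩ := ha
        refine ⟨h3, ?_⟩
        by_contra hpar
        have hpar0 : (a : ℕ) % 2 = 0 := by omega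
        simp only [extendProfile, dif_neg h3, if_pos hpar0, Equiv.refl_apply] at hP
        exact absurd hgt (asymm hP)
      · intro _ _ _ _ h; exact h
      · intro b hb
        simp only [mem_filter, mem_univ, true_and] at hb
        refine ⟨b, ?_, rfl⟩
        simp only [mem_filter, mem_univ, true_and]
        refine ⟨?_, hb.1⟩
        have hpar : ¬ (b : ℕ) % 2 = 0 := by omega
        simp only [extendProfile, dif_neg hb.1, if_neg hpar]
        simp only [Fin.revPerm_apply, Fin.rev_lt_rev]
        exact hgt

lemma extend_defeats {m n : ℕ} (hn : 3 ≤ n) (hno : Odd n) (v : Fin 3 → (Fin m ≃ Fin m))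
    (x y : Fin m) : defeats (extendProfile (n := n) v) x y ↔ defeats v x y := by
  by_cases hxy : x = y
  · subst hxy
    exact ⟨fun h => absurd rfl (Nat.ne_of_lt h), fun h => absurd rfl (Nat.ne_of_lt h)⟩
  · unfold defeats
    rw [extend_count hn hno v x y hxy, extend_count hn hno v y x (Ne.symm hxy)]
    omega

lemma extend_copelandSet_card {m n : ℕ} (hn : 3 ≤ n) (hno : Odd n)
    (v : Fin 3 → (Fin m ≃ Fin m)) :
    (copelandSet (extendProfile (n := n) v)).card = (copelandSet v).card := by
  have hsc : ∀ x, copelandScore (extendProfile (n := n) v) x = copelandScore v x := by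
    intro x
    unfold copelandScore
    congr 1
    apply Finset.filter_congr
    intro y _
    exact extend_defeats hn hno v x y
  unfold copelandSet
  congr 1
  apply Finset.filter_congr
  intro x _
  simp only [hsc]

/- ## building permutations from value functions -/

noncomputable def finize {m : ℕ} (f : ℕ → ℕ) (hf : ∀ x, x < m → f x < m)
    (hinj : ∀ x y, x < m → y < m → f x = f y → x = y) : Fin m ≃ Fin m :=
  Equiv.ofBijective (fun x => ⟨f x.val, hf _ x.isLt⟩)
    (Finite.injective_iff_bijective.mp
      (fun a b hab => Fin.ext (hinj _ _ a.isLt b.isLt (congrArg Fin.val hab))))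

@[simp] lemma finize_apply {m : ℕ} (f : ℕ → ℕ) (hf : ∀ x, x < m → f x < m)
    (hinj : ∀ x y, x < m → y < m → f x = f y → x = y) (x : Fin m) :
    (finize f hf hinj) x = ⟨f x.val, hf _ x.isLt⟩ := rfl

lemma defeats3_iff {m : ℕ} (v : Fin 3 → (Fin m ≃ Fin m)) (x y : Fin m) (hxy : x ≠ y) :
    defeats v x y ↔ (((v 0) x < (v 0) y ∧ (v 1) x < (v 1) y) ∨
      ((v 0) x < (v 0) y ∧ (v 2) x < (v 2) y) ∨ ((v 1) x < (v 1) y ∧ (v 2) x < (v 2) y)) := by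
  unfold defeats
  rw [card_filter_fin3, card_filter_fin3]
  have hne : ∀ i : Fin 3, (v i) x ≠ (v i) y := fun i => (Equiv.injective _).ne hxy
  have d : ∀ i : Fin 3, ((v i) y < (v i) x) ↔ ¬ ((v i) x < (v i) y) := by
    intro i
    constructor
    · exact fun h => asymm h
    · exact fun h => ((hne i).lt_or_gt).resolve_left h
  simp only [d]
  by_cases c0 : (v 0) x < (v 0) y <;> by_cases c1 : (v 1) x < (v 1) y <;>
    by_cases c2 : (v 2) x < (v 2) y <;> simp [c0, c1, c2]

/- ## the odd-size construction -/

section OddCase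

variable (m q t : ℕ)

def v2f (x : ℕ) : ℕ := if x < q then (if x ≤ t then x + t else x - t - 1) else x

def v3f (x : ℕ) : ℕ := if x < q then (if x ≤ t then 2*(t-x) else 2*(q-1-x)+1) else x

lemma v2f_lt (hq : q = 2*t + 1) (hqm : q ≤ m) : ∀ x, x < m → v2f q t x < m := by
  intro x hx; unfold v2f; split_ifs <;> omega

lemma v2f_inj (hq : q = 2*t + 1) : ∀ x y, x < m → y < m → v2f q t x = v2f q t y → x = y := by
  intro x y hx hy; unfold v2f; split_ifs <;> omega

lemma v3f_lt (hq : q = 2*t + 1) (hqm : q ≤ m) : ∀ x, x < m → v3f q t x < m := by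
  intro x hx; unfold v3f; split_ifs <;> omega

lemma v3f_inj (hq : q = 2*t + 1) : ∀ x y, x < m → y < m → v3f q t x = v3f q t y → x = y := by
  intro x y hx hy; unfold v3f; split_ifs <;> omega

noncomputable def oddProf (hq : q = 2*t + 1) (hqm : q ≤ m) : Fin 3 → (Fin m ≃ Fin m) :=
  ![finize id (fun _ h => h) (fun _ _ _ _ h => h),
    finize (v2f q t) (v2f_lt m q t hq hqm) (v2f_inj m q t hq),
    finize (v3f q t) (v3f_lt m q t hq hqm) (v3f_inj m q t hq)]

def rotT (X Y : ℕ) : Prop :=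
  (X < q ∧ Y < q ∧ ((X < Y ∧ Y ≤ X + t) ∨ (Y + t + 1 ≤ X))) ∨
    (X < q ∧ q ≤ Y) ∨ (q ≤ X ∧ q ≤ Y ∧ X < Y)

instance : ∀ X Y, Decidable (rotT q t X Y) := fun _ _ => by unfold rotT; infer_instance

lemma odd_maj (hq : q = 2*t + 1) (hqm : q ≤ m) (x y : Fin m) :
    defeats (oddProf m q t hq hqm) x y ↔ rotT q t x.val y.val := by
  by_cases hxy : x = y
  · subst hxy
    constructor
    · exact fun h => absurd rfl (Nat.ne_of_lt h)
    · intro h; exfalso; unfold rotT at h; omega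
  · rw [defeats3_iff _ _ _ hxy]
    have hx := x.isLt
    have hy := y.isLt
    have hvxy : x.val ≠ y.val := fun h => hxy (Fin.ext h)
    simp only [oddProf, Matrix.cons_val_zero, Matrix.cons_val_one, Matrix.head_cons,
      Matrix.cons_val_two, Matrix.tail_cons, finize_apply, Fin.mk_lt_mk, id_eq]
    unfold v2f v3f rotT
    split_ifs <;> omega

end OddCase

section OddScores

variable (m q t : ℕ) (hq : q = 2*t + 1) (hqm : q ≤ m)

lemma odd_score (x : Fin m) :
    copelandScore (oddProf m q t hq hqm) x =
      if x.val < q then m - 1 - t else m - 1 - x.val := by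
  unfold copelandScore
  rw [Finset.filter_congr (fun y _ => by
    rw [odd_maj m q t hq hqm x y] : ∀ y ∈ univ,
      (defeats (oddProf m q t hq hqm) x y ↔ rotT q t x.val y.val))]
  rw [card_filter_fin m (fun Y => rotT q t x.val Y)]
  have hx := x.isLt
  by_cases hxq : x.val < q
  · rw [if_pos hxq]
    by_cases hxt : x.val ≤ t
    · rw [card_filter_two_ico _ (x.val + 1) (x.val + t + 1) q m m
        (fun y hy => by unfold rotT; omega) (by omega) (by omega) (by omega)]
      omega
    · rw [card_filter_two_ico _ 0 (x.val - t) (x.val + 1) m m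
        (fun y hy => by unfold rotT; omega) (by omega) (by omega) (by omega)]
      omega
  · rw [if_neg hxq]
    rw [card_filter_two_ico _ 0 0 (x.val + 1) m m
      (fun y hy => by unfold rotT; omega) (by omega) (by omega) (by omega)]
    omega

lemma odd_set_card (hm : 1 ≤ m) :
    (copelandSet (oddProf m q t hq hqm)).card = q := by
  unfold copelandSet
  rw [Finset.filter_congr (fun x _ => by
    simp only [odd_score m q t hq hqm]
    constructor
    · intro h
      have h0 := h ⟨0, by omega⟩
      simp only at h0
      by_contra hxq
      rw [if_neg hxq, if_pos (by omega : (0:ℕ) < q)] at h0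
      have hx := x.isLt
      omega
    · intro hxq z
      rw [if_pos hxq]
      have hz := z.isLt
      by_cases hzq : z.val < q
      · rw [if_pos hzq]
      · rw [if_neg hzq]; omega
    : ∀ x ∈ univ, ((∀ z, copelandScore (oddProf m q t hq hqm) z ≤
        copelandScore (oddProf m q t hq hqm) x) ↔ x.val < q))]
  rw [card_filter_fin m (fun X => X < q)]
  have : (range m).filter (fun X => X < q) = range q := by
    ext y; simp only [mem_filter, mem_range]; omega
  rw [this, card_range]

end OddScores

/- ## the even-size construction -/

section EvenCase

variable (m q t : ℕ)

def g1f (x : ℕ) : ℕ := if x < q then x + (m - q) else x - q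

def g3f (x : ℕ) : ℕ :=
  if x = 0 then m - 1 else if x < q then (if x ≤ t then 2*(t-x) else 2*(q-1-x)+1) else x - 1

lemma g1f_lt (hqm : q < m) : ∀ x, x < m → g1f m q x < m := by
  intro x hx; unfold g1f; split_ifs <;> omega

lemma g1f_inj (hqm : q < m) : ∀ x y, x < m → y < m → g1f m q x = g1f m q y → x = y := by
  intro x y hx hy; unfold g1f; split_ifs <;> omega

lemma g3f_lt (hq : q = 2*t + 1) (hqm : q < m) : ∀ x, x < m → g3f m q t x < m := by
  intro x hx; unfold g3f; split_ifs <;> omega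

lemma g3f_inj (hq : q = 2*t + 1) (hqm : q < m) :
    ∀ x y, x < m → y < m → g3f m q t x = g3f m q t y → x = y := by
  intro x y hx hy; unfold g3f; split_ifs <;> omega

noncomputable def evenProf (hq : q = 2*t + 1) (hqm : q < m) : Fin 3 → (Fin m ≃ Fin m) :=
  ![finize (g1f m q) (g1f_lt m q hqm) (g1f_inj m q hqm),
    finize (v2f q t) (v2f_lt m q t hq (le_of_lt hqm)) (v2f_inj m q t hq),
    finize (g3f m q t) (g3f_lt m q t hq hqm) (g3f_inj m q t hq hqm)]

def rotS (X Y : ℕ) : Prop :=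
  (X < q ∧ Y < q ∧ ((X < Y ∧ Y ≤ X + t) ∨ (Y + t + 1 ≤ X))) ∨
    (1 ≤ X ∧ X < q ∧ q ≤ Y) ∨ (q ≤ X ∧ Y = 0) ∨ (q ≤ X ∧ q ≤ Y ∧ X < Y)

instance : ∀ X Y, Decidable (rotS q t X Y) := fun _ _ => by unfold rotS; infer_instance

lemma even_maj (hq : q = 2*t + 1) (ht : 1 ≤ t) (hqm : q < m) (x y : Fin m) :
    defeats (evenProf m q t hq hqm) x y ↔ rotS q t x.val y.val := by
  by_cases hxy : x = y
  · subst hxy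
    constructor
    · exact fun h => absurd rfl (Nat.ne_of_lt h)
    · intro h; exfalso; unfold rotS at h; omega
  · rw [defeats3_iff _ _ _ hxy]
    have hx := x.isLt
    have hy := y.isLt
    have hvxy : x.val ≠ y.val := fun h => hxy (Fin.ext h)
    simp only [evenProf, Matrix.cons_val_zero, Matrix.cons_val_one, Matrix.head_cons,
      Matrix.cons_val_two, Matrix.tail_cons, finize_apply, Fin.mk_lt_mk]
    unfold g1f v2f g3f rotS
    split_ifs <;> omega

lemma even_score (hq : q = 2*t + 1) (ht : 1 ≤ t) (hqm : q < m) (x : Fin m) :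
    copelandScore (evenProf m q t hq hqm) x =
      if x.val = 0 then t else if x.val < q then m - 1 - t else m - x.val := by
  unfold copelandScore
  rw [Finset.filter_congr (fun y _ => by
    rw [even_maj m q t hq ht hqm x y] : ∀ y ∈ univ,
      (defeats (evenProf m q t hq hqm) x y ↔ rotS q t x.val y.val))]
  rw [card_filter_fin m (fun Y => rotS q t x.val Y)]
  have hx := x.isLt
  by_cases hx0 : x.val = 0
  · rw [if_pos hx0]
    rw [card_filter_two_ico _ 0 0 1 (t + 1) m
      (fun y hy => by unfold rotS; omega) (by omega) (by omega) (by omega)]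
    omega
  · rw [if_neg hx0]
    by_cases hxq : x.val < q
    · rw [if_pos hxq]
      by_cases hxt : x.val ≤ t
      · rw [card_filter_two_ico _ (x.val + 1) (x.val + t + 1) q m m
          (fun y hy => by unfold rotS; omega) (by omega) (by omega) (by omega)]
        omega
      · rw [card_filter_two_ico _ 0 (x.val - t) (x.val + 1) m m
          (fun y hy => by unfold rotS; omega) (by omega) (by omega) (by omega)]
        omega
    · rw [if_neg hxq]
      rw [card_filter_two_ico _ 0 1 (x.val + 1) m m
        (fun y hy => by unfold rotS; omega) (by omega) (by omega) (by omega)]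
      omega

lemma even_set_card (hq : q = 2*t + 1) (ht : 1 ≤ t) (hqm : q < m) :
    (copelandSet (evenProf m q t hq hqm)).card = q - 1 := by
  unfold copelandSet
  rw [Finset.filter_congr (fun x _ => by
    simp only [even_score m q t hq ht hqm]
    constructor
    · intro h
      have h1 := h ⟨1, by omega⟩
      simp only at h1
      rw [if_neg (by omega : ¬ (1:ℕ) = 0), if_pos (by omega : (1:ℕ) < q)] at h1
      have hx := x.isLt
      by_contra hxq
      by_cases hx0 : x.val = 0
      · rw [if_pos hx0] at h1; omega
      · rw [if_neg hx0] at h1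
        rw [if_neg (by omega : ¬ x.val < q)] at h1
        omega
    · intro hxq z
      rw [if_neg (by omega : ¬ x.val = 0), if_pos hxq.2]
      have hz := z.isLt
      by_cases hz0 : z.val = 0
      · rw [if_pos hz0]; omega
      · rw [if_neg hz0]
        by_cases hzq : z.val < q
        · rw [if_pos hzq]
        · rw [if_neg hzq]; omega
    : ∀ x ∈ univ, ((∀ z, copelandScore (evenProf m q t hq hqm) z ≤
        copelandScore (evenProf m q t hq hqm) x) ↔ (1 ≤ x.val ∧ x.val < q)))]
  rw [card_filter_fin m (fun X => 1 ≤ X ∧ X < q)]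
  have : (range m).filter (fun X => 1 ≤ X ∧ X < q) = Ico 1 q := by
    ext y; simp only [mem_filter, mem_range, mem_Ico]; omega
  rw [this, Nat.card_Ico]

end EvenCase

section Necessity

variable {m n : ℕ} (u : Fin n → (Fin m ≃ Fin m))

lemma count_add (x y : Fin m) (hxy : x ≠ y) :
    (univ.filter (fun i : Fin n => (u i) x < (u i) y)).card +
    (univ.filter (fun i : Fin n => (u i) y < (u i) x)).card = n := by
  have hcg : ∀ i ∈ univ, (((u i) y < (u i) x) ↔ ¬ ((u i) x < (u i) y)) := by
    intro i _
    have hne : (u i) x ≠ (u i) y := (Equiv.injective _).ne hxy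
    exact ⟨fun h => asymm h, fun h => (hne.lt_or_gt).resolve_left h⟩
  rw [Finset.filter_congr hcg, Finset.card_filter_add_card_filter_not,
    card_univ, Fintype.card_fin]

lemma complete (hno : Odd n) (x y : Fin m) (hxy : x ≠ y) :
    defeats u x y ∨ defeats u y x := by
  unfold defeats
  have h := count_add u x y hxy
  have hodd := Nat.odd_iff.mp hno
  omega

lemma defeats_irrefl (x : Fin m) : ¬ defeats u x x := fun h => absurd rfl (Nat.ne_of_lt h)

lemma score_loss (hno : Odd n) (x : Fin m) :
    copelandScore u x + (univ.filter (fun y : Fin m => defeats u y x)).card = m - 1 := by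
  unfold copelandScore
  rw [← card_union_of_disjoint (by
    rw [Finset.disjoint_left]
    intro y hy hy'
    simp only [mem_filter, mem_univ, true_and] at hy hy'
    unfold defeats at hy hy'
    omega)]
  have hu : (univ.filter (fun y : Fin m => defeats u x y)) ∪
      (univ.filter (fun y : Fin m => defeats u y x)) = univ.erase x := by
    ext y
    simp only [mem_union, mem_filter, mem_univ, true_and, mem_erase]
    constructor
    · rintro (h | h)
      · exact ⟨fun hyx => defeats_irrefl u x (hyx ▸ h), trivial⟩
      · exact ⟨fun hyx => defeats_irrefl u x (hyx ▸ h), trivial⟩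
    · rintro ⟨hyx, -⟩
      rcases complete u hno x y (Ne.symm hyx) with h | h
      · exact Or.inl h
      · exact Or.inr h
  rw [hu, card_erase_of_mem (mem_univ x), card_univ, Fintype.card_fin]

lemma sum_scores (hno : Odd n) :
    2 * (∑ x : Fin m, copelandScore u x) = m * (m - 1) := by
  have hswap : ∑ x : Fin m, copelandScore u x =
      ∑ x : Fin m, (univ.filter (fun y : Fin m => defeats u y x)).card := by
    unfold copelandScore
    simp only [Finset.card_filter]
    exact Finset.sum_comm
  have : 2 * (∑ x : Fin m, copelandScore u x) =
      ∑ x : Fin m, (copelandScore u x +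
        (univ.filter (fun y : Fin m => defeats u y x)).card) := by
    rw [Finset.sum_add_distrib, ← hswap]; ring
  rw [this, Finset.sum_congr rfl (fun x _ => score_loss u hno x), Finset.sum_const,
    card_univ, Fintype.card_fin, smul_eq_mul]

lemma necessity (hm : 3 ≤ m) (hno : Odd n) :
    ¬ (Even m ∧ (copelandSet u).card = m) ∧ ¬ (Odd m ∧ (copelandSet u).card = m - 1) := by
  constructor
  · rintro ⟨hEm, hcard⟩
    have hSuniv : copelandSet u = univ := by
      apply Finset.eq_univ_of_card
      rw [hcard, Fintype.card_fin]
    have hAll : ∀ x : Fin m, x ∈ copelandSet u := Finset.eq_univ_iff_forall.mp hSuniv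
    have hx0 : (⟨0, by omega⟩ : Fin m) ∈ copelandSet u := hAll _
    have hmax : ∀ z : Fin m, copelandScore u z ≤ copelandScore u ⟨0, by omega⟩ :=
      (mem_filter.mp hx0).2
    have hall : ∀ x : Fin m, copelandScore u x = copelandScore u ⟨0, by omega⟩ := by
      intro x
      have hx : x ∈ copelandSet u := hAll _
      exact le_antisymm (hmax x) ((mem_filter.mp hx).2 _)
    have hsum := sum_scores u hno
    rw [Finset.sum_congr rfl (fun x _ => hall x), Finset.sum_const, card_univ,
      Fintype.card_fin, smul_eq_mul] at hsum
    set s := copelandScore u ⟨0, by omega⟩ with hs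
    have h2 : m * (2 * s) = m * (m - 1) := by rw [← hsum]; ring
    have h3 : 2 * s = m - 1 := Nat.eq_of_mul_eq_mul_left (by omega) h2
    have := Nat.even_iff.mp hEm
    omega
  · rintro ⟨hOm, hcard⟩
    obtain ⟨c, hc⟩ := hOm
    have hc1 : 1 ≤ c := by omega
    have hz : ∃ z : Fin m, z ∉ copelandSet u := by
      by_contra h
      push_neg at h
      have : copelandSet u = univ := Finset.eq_univ_iff_forall.mpr h
      rw [this, card_univ, Fintype.card_fin] at hcard
      omega
    obtain ⟨z, hz⟩ := hz
    have hSne : (copelandSet u).Nonempty := Finset.card_pos.mp (by omega)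
    obtain ⟨w0, hw0⟩ := hSne
    set s := copelandScore u w0 with hs
    have hmax : ∀ x : Fin m, copelandScore u x ≤ s := (mem_filter.mp hw0).2
    have hallS : ∀ w ∈ copelandSet u, copelandScore u w = s := by
      intro w hw
      exact le_antisymm (hmax w) ((mem_filter.mp hw).2 w0)
    have hzlt : copelandScore u z < s := by
      have : ¬ ∀ z' : Fin m, copelandScore u z' ≤ copelandScore u z := by
        intro h
        exact hz (mem_filter.mpr ⟨mem_univ _, h⟩)
      push_neg at this
      obtain ⟨w, hw⟩ := this
      exact lt_of_lt_of_le hw (hmax w)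
    have huniv : (univ : Finset (Fin m)) = insert z (copelandSet u) := by
      symm
      apply Finset.eq_univ_of_card
      rw [Finset.card_insert_of_notMem hz, hcard, Fintype.card_fin]
      omega
    have hsum := sum_scores u hno
    rw [huniv, Finset.sum_insert hz, Finset.sum_congr rfl (fun w hw => hallS w hw),
      Finset.sum_const, hcard, smul_eq_mul] at hsum
    have hsle : s ≤ m - 1 := by
      have := score_loss u hno w0
      omega
    set z' := copelandScore u z with hz'
    have hm1 : m - 1 = 2 * c := by omega
    rw [hm1, hc] at hsum
    -- hsum : 2 * (z' + 2*c*s) = (2*c+1) * (2*c)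
    rcases le_or_gt s c with hsc | hsc
    · have h6 : 2 * (c * s) ≤ 2 * (c * c) :=
        Nat.mul_le_mul_left _ (Nat.mul_le_mul_left _ hsc)
      have hexp : 2 * (z' + 2 * c * s) = 2 * z' + 4 * (c * s) := by ring
      have hexp2 : (2 * c + 1) * (2 * c) = 4 * (c * c) + 2 * c := by ring
      rw [hexp, hexp2] at hsum
      have : z' < s := hzlt
      linarith
    · have h6 : 2 * (c * (c + 1)) ≤ 2 * (c * s) :=
        Nat.mul_le_mul_left _ (Nat.mul_le_mul_left _ hsc)
      have hexp : 2 * (z' + 2 * c * s) = 2 * z' + 4 * (c * s) := by ring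
      have hexp2 : (2 * c + 1) * (2 * c) = 4 * (c * c) + 2 * c := by ring
      have hexp3 : 2 * (c * (c + 1)) = 2 * (c * c) + 2 * c := by ring
      rw [hexp, hexp2] at hsum
      rw [hexp3] at h6
      linarith

end Necessity


/-- For odd `n ≥ 3` and `1 ≤ k ≤ m`: a Copeland choice set of size `k` is
achievable if and only if it is not the case that (`m` is even and `k = m`)
and not the case that (`m` is odd and `k = m − 1`). -/
theorem copeland_range_characterization (m n : ℕ) (hm : 3 ≤ m) (hno : Odd n)
    (hn : 3 ≤ n) (k : ℕ) (hk : 1 ≤ k) (hkm : k ≤ m) :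
    (∃ u : Fin n → (Fin m ≃ Fin m), (copelandSet u).card = k) ↔
      (¬ (Even m ∧ k = m) ∧ ¬ (Odd m ∧ k = m - 1)) := by
  constructor
  · rintro ⟨u, hu⟩
    have h := necessity u hm hno
    rw [hu] at h
    exact h
  · rintro ⟨h1, h2⟩
    have h1' : ¬ (m % 2 = 0 ∧ k = m) := fun h => h1 ⟨Nat.even_iff.mpr h.1, h.2⟩
    have h2' : ¬ (m % 2 = 1 ∧ k = m - 1) := fun h => h2 ⟨Nat.odd_iff.mpr h.1, h.2⟩
    rcases Nat.even_or_odd k with hke | hko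
    · obtain ⟨t', ht'⟩ := hke
      have hq : k + 1 = 2 * t' + 1 := by omega
      have ht : 1 ≤ t' := by omega
      have hkm' : k + 1 < m := by omega
      refine ⟨extendProfile (evenProf m (k + 1) t' hq hkm'), ?_⟩
      rw [extend_copelandSet_card hn hno, even_set_card m (k + 1) t' hq ht hkm']
      omega
    · obtain ⟨t', ht'⟩ := hko
      have hq : k = 2 * t' + 1 := by omega
      refine ⟨extendProfile (oddProf m k t' hq hkm), ?_⟩
      rw [extend_copelandSet_card hn hno, odd_set_card m k t' hq hkm (by omega)]
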